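/- arXiv:1404.2530 — 2 statements merged into one kernel-verified Lean document; each statement's English description precedes it below -/
import Mathlib

section
/- Let π be a one-block factor code from a one-step SFT X to a sofic shift Y, and let f = max over symbols w of Y of |π_b^{-1}(w)|. Then there exists a minimal transition block (W, n, M) of π (i.e., a transition block whose depth |M| equals the minimum depth over all transition blocks) with |W| ≤ |𝒜(Y)| · 2^{f² + f + 1}. -/
open List

/-- `U` is a (nonempty) block of the one-step SFT `X` determined by the
transition relation `TX`. -/
def IsXBlock {AX : Type*} (TX : AX → AX → Prop) (U : List AX) : Prop :=
  U ≠ [] ∧ U.Chain' TX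

/-- The set of `X`-blocks mapping (symbol-wise, via `πb`) to the word `W`. -/
def preim {AX AY : Type*} (TX : AX → AX → Prop) (πb : AX → AY) (W : List AY) :
    Set (List AX) :=
  {U | IsXBlock TX U ∧ U.map πb = W}

/-- `W` is a block of the sofic shift `Y = π(X)`. -/
def IsYBlock {AX AY : Type*} (TX : AX → AX → Prop) (πb : AX → AY) (W : List AY) : Prop :=
  (preim TX πb W).Nonempty

/-- `π_b^{-1}(W)_i`: the symbols occurring at position `i` in some preimage block of `W`. -/
def preimAt {AX AY : Type*} (TX : AX → AX → Prop) (πb : AX → AY) (W : List AY) (i : ℕ) :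
    Set AX :=
  {a | ∃ U ∈ preim TX πb W, U[i]? = some a}

/-- The `W`-pairing: the set of (first symbol, last symbol) pairs realized by
preimage blocks of `W`. -/
def pairing {AX AY : Type*} (TX : AX → AX → Prop) (πb : AX → AY) (W : List AY) :
    Set (AX × AX) :=
  {p | ∃ U ∈ preim TX πb W, U.head? = some p.1 ∧ U.getLast? = some p.2}

/-- `U ∈ π_b^{-1}(W)` is routable through `a` at time `n`. -/
def Routable {AX AY : Type*} (TX : AX → AX → Prop) (πb : AX → AY) (W : List AY) (n : ℕ)
    (a : AX) (U : List AX) : Prop :=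
  ∃ U' ∈ preim TX πb W, U'.head? = U.head? ∧ U'[n]? = some a ∧ U'.getLast? = U.getLast?

/-- `(W, n, M)` is a transition block. -/
def IsTransBlock {AX AY : Type*} (TX : AX → AX → Prop) (πb : AX → AY) (W : List AY)
    (n : ℕ) (M : Finset AX) : Prop :=
  IsYBlock TX πb W ∧ 0 < n ∧ n < W.length - 1 ∧
    (∀ a ∈ M, a ∈ preimAt TX πb W n) ∧
    ∀ U ∈ preim TX πb W, ∃ a ∈ M, Routable TX πb W n a U

/-- The fiber `π_b^{-1}(b)` of a `Y`-symbol. -/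
def fiber {AX AY : Type*} [Fintype AX] [DecidableEq AY] (πb : AX → AY) (b : AY) :
    Finset AX :=
  Finset.univ.filter (fun a => πb a = b)

/-- `f = max_{w ∈ 𝒜(Y)} |π_b^{-1}(w)|`. -/
def fMax {AX AY : Type*} [Fintype AX] [Fintype AY] [DecidableEq AY] (πb : AX → AY) : ℕ :=
  Finset.univ.sup (fun b : AY => (fiber πb b).card)


section ListAux
variable {α : Type*}

lemma auxExistsHead {l : List α} (h : l ≠ []) : ∃ x, l.head? = some x := by
  cases l with
  | nil => exact absurd rfl h
  | cons x t => exact ⟨x, rfl⟩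

lemma auxExistsLast {l : List α} (h : l ≠ []) : ∃ x, l.getLast? = some x := by
  cases l with
  | nil => exact absurd rfl h
  | cons x t => exact ⟨(x :: t).getLast (by simp), getLast?_eq_getLast _⟩

lemma auxNeNilHead {l : List α} {x : α} (h : l.head? = some x) : l ≠ [] := by
  rintro rfl; simp at h

lemma auxNeNilLast {l : List α} {x : α} (h : l.getLast? = some x) : l ≠ [] := by
  rintro rfl; simp at h

lemma auxLastTake {l : List α} {k : ℕ} (h : k < l.length) :
    (l.take (k + 1)).getLast? = some l[k] := by
  rw [take_succ, getElem?_eq_getElem h]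
  rw [show (some l[k]).toList = [l[k]] from rfl]
  exact getLast?_concat

lemma auxHeadTake {l : List α} {k : ℕ} (hk : 0 < k) : (l.take k).head? = l.head? := by
  cases l <;> cases k <;> simp at hk ⊢

lemma auxLtOfGetElem? {l : List α} {k : ℕ} {x : α} (h : l[k]? = some x) : k < l.length := by
  by_contra hc
  rw [getElem?_eq_none (by omega)] at h
  cases h

lemma auxTailAppend {l l2 : List α} (h : l ≠ []) : (l ++ l2).tail = l.tail ++ l2 := by
  cases l with
  | nil => exact absurd rfl h
  | cons x t => simp
lemma auxGetLastDrop {l : List α} {k : ℕ} (h : k < l.length) :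
    (l.drop k).getLast? = l.getLast? := by
  rw [List.getLast?_drop, if_neg (by omega)]

lemma auxGetElemTake {l : List α} {m k : ℕ} (h : m < k) : (l.take k)[m]? = l[m]? := by
  rw [List.getElem?_take, if_pos h]

lemma auxGetElemAppend {l₁ l₂ : List α} {k : ℕ} (h : k < l₁.length) :
    (l₁ ++ l₂)[k]? = l₁[k]? := by
  rw [List.getElem?_append, if_pos h]

end ListAux

section PRelSec
variable {AX AY : Type*}

def PRel (TX : AX → AX → Prop) (πb : AX → AY) (V : List AY) (a b : AX) : Prop :=
  ∃ U : List AX, U.Chain' TX ∧ U.map πb = V ∧ U.head? = some a ∧ U.getLast? = some b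

variable {TX : AX → AX → Prop} {πb : AX → AY}

lemma PRel.head_eq {V : List AY} {a b : AX} (h : PRel TX πb V a b) :
    V.head? = some (πb a) := by
  obtain ⟨U, _, hm, hh, _⟩ := h
  rw [← hm, head?_map, hh]; rfl

lemma PRel.last_eq {V : List AY} {a b : AX} (h : PRel TX πb V a b) :
    V.getLast? = some (πb b) := by
  obtain ⟨U, _, hm, _, hl⟩ := h
  rw [← hm, getLast?_map, hl]; rfl

lemma glue {U1 U2 : List AX} {c : AX} (h1 : U1.Chain' TX) (h2 : U2.Chain' TX)
    (hl : U1.getLast? = some c) (hh : U2.head? = some c) :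
    (U1 ++ U2.tail).Chain' TX ∧ (U1 ++ U2.tail).head? = U1.head? ∧
      (U1 ++ U2.tail).getLast? = U2.getLast? ∧
      (U1 ++ U2.tail).map πb = U1.map πb ++ (U2.map πb).tail := by
  have hU1ne : U1 ≠ [] := auxNeNilLast hl
  cases U2 with
  | nil => simp at hh
  | cons x t =>
    have hx : x = c := by simpa using hh
    refine ⟨?_, head?_append_of_ne_nil _ hU1ne, ?_, ?_⟩
    · refine isChain_append.mpr ?_
      refine ⟨h1, h2.tail, ?_⟩
      intro a ha y hy
      have hac : a = c := by
        rw [Option.mem_def, hl] at ha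
        exact (Option.some.inj ha).symm
      rw [hac, ← hx]
      exact (isChain_cons.mp h2).1 y hy
    · show (U1 ++ t).getLast? = (x :: t).getLast?
      cases t with
      | nil => rw [append_nil, getLast?_singleton, hl, hx]
      | cons y ys =>
        rw [getLast?_cons_cons]
        exact getLast?_append_of_ne_nil _ (cons_ne_nil _ _)
    · simp [map_append]
end PRelSec

section SplitSec
variable {AX AY : Type*} {TX : AX → AX → Prop} {πb : AX → AY}

lemma split_app {U : List AX} {A B : List AY} (hc : U.Chain' TX) (hm : U.map πb = A ++ B) :
    (U.take A.length).map πb = A ∧ (U.drop A.length).map πb = B ∧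
    (U.take A.length).Chain' TX ∧ (U.drop A.length).Chain' TX ∧
    (∀ x ∈ (U.take A.length).getLast?, ∀ y ∈ (U.drop A.length).head?, TX x y) ∧
    (U.take A.length).length = A.length := by
  have hlen : U.length = A.length + B.length := by
    have := congrArg List.length hm; simpa using this
  refine ⟨?_, ?_, hc.take _, hc.drop _, ?_, by rw [length_take]; omega⟩
  · rw [map_take, hm, take_left]
  · rw [map_drop, hm, drop_left]
  · have hc' := hc
    rw [← take_append_drop A.length U] at hc'
    exact (isChain_append.mp hc').2.2

lemma seg_drop {U : List AX} {A : List AY} (hc : U.Chain' TX) (hm : U.map πb = A)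
    {n : ℕ} {a b : AX} (ha : U[n]? = some a) (hb : U.getLast? = some b) :
    PRel TX πb (A.drop n) a b := by
  have hn : n < U.length := auxLtOfGetElem? ha
  refine ⟨U.drop n, hc.drop n, by rw [map_drop, hm], ?_, ?_⟩
  · rw [head?_drop]; exact ha
  · rw [auxGetLastDrop hn]; exact hb

lemma seg_take {U : List AX} {A : List AY} (hc : U.Chain' TX) (hm : U.map πb = A)
    {n : ℕ} {a : AX} (ha : U[n]? = some a) :
    (U.take (n + 1)).Chain' TX ∧ (U.take (n + 1)).map πb = A.take (n + 1) ∧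
    (U.take (n + 1)).head? = U.head? ∧ (U.take (n + 1)).getLast? = some a ∧
    (U.take (n + 1)).length = n + 1 := by
  have hn : n < U.length := auxLtOfGetElem? ha
  refine ⟨hc.take _, by rw [map_take, hm], auxHeadTake (by omega), ?_, by rw [length_take]; omega⟩
  rw [auxLastTake hn, ← getElem?_eq_getElem hn, ha]
end SplitSec

section Core
variable {AX AY : Type*} {TX : AX → AX → Prop} {πb : AX → AY}

lemma preim_length {W : List AY} {U : List AX} (hU : U ∈ preim TX πb W) :
    U.length = W.length := by
  have := congrArg List.length hU.2; simpa using this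

lemma contract {P Q R : List AY} {n : ℕ} (hn : n + 1 ≤ P.length) (hR : R ≠ [])
    (hrel : ∀ a b, PRel TX πb (P.drop n ++ Q) a b → PRel TX πb (P.drop n) a b)
    {U : List AX} (hU : U ∈ preim TX πb (P ++ Q ++ R)) {a : AX} (ha : U[n]? = some a) :
    ∃ U3 ∈ preim TX πb (P ++ R), U3.head? = U.head? ∧ U3[n]? = some a ∧
      U3.getLast? = U.getLast? := by
  obtain ⟨⟨hne, hch⟩, hmap⟩ := hU
  obtain ⟨hFm, hGm, hFc, hGc, hjun, hFlen⟩ := split_app (A := P ++ Q) (B := R) hch hmap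
  have hlenU : U.length = (P ++ Q).length + R.length := by
    have h1 := congrArg List.length hmap
    simp only [length_map, length_append] at h1
    simp only [length_append]
    omega
  have hPA : P.length ≤ (P ++ Q).length := by simp
  have hRpos : 0 < R.length := length_pos_iff.mpr hR
  have hnA : n < (P ++ Q).length := by omega
  have haF : (U.take (P ++ Q).length)[n]? = some a := by
    rw [auxGetElemTake hnA]; exact ha
  have hFne : U.take (P ++ Q).length ≠ [] := by
    intro h0
    have := congrArg List.length h0
    rw [hFlen, length_append] at this
    simp only [length_nil] at this
    omega
  obtain ⟨d, hd⟩ := auxExistsLast hFne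
  have hseg : PRel TX πb ((P ++ Q).drop n) a d := seg_drop hFc hFm haF hd
  rw [drop_append_of_le_length (by omega)] at hseg
  obtain ⟨V, hVc, hVm, hVh, hVl⟩ := hrel a d hseg
  obtain ⟨hTc, hTm, hTh, hTl, hTlen⟩ := seg_take hFc hFm haF
  rw [take_append_of_le_length (by omega)] at hTm
  obtain ⟨hHc, hHh, hHl, hHm⟩ := glue (πb := πb) hTc hVc hTl hVh
  have hHm' : (((U.take (P ++ Q).length).take (n + 1) ++ V.tail)).map πb = P := by
    rw [hHm, hTm, hVm, tail_drop, take_append_drop]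
  have hHl' : ((U.take (P ++ Q).length).take (n + 1) ++ V.tail).getLast? = some d :=
    hHl.trans hVl
  have hHlen : n + 1 ≤ ((U.take (P ++ Q).length).take (n + 1) ++ V.tail).length := by
    rw [length_append, hTlen]; omega
  have hGne : U.drop (P ++ Q).length ≠ [] := by
    intro h0
    have := congrArg List.length h0
    rw [length_drop] at this
    simp only [length_nil] at this
    omega
  have hHne : (U.take (P ++ Q).length).take (n + 1) ++ V.tail ≠ [] := by
    intro h0; have := congrArg List.length h0
    rw [length_append, hTlen] at this
    simp only [length_nil] at this
    omega
  refine ⟨((U.take (P ++ Q).length).take (n + 1) ++ V.tail) ++ U.drop (P ++ Q).length,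
    ⟨⟨?_, ?_⟩, ?_⟩, ?_, ?_, ?_⟩
  · intro h0
    have := congrArg List.length h0
    rw [length_append, length_append, hTlen] at this
    simp only [length_nil] at this
    omega
  · refine isChain_append.mpr ?_
    refine ⟨hHc, hGc, ?_⟩
    intro x hx y hy
    have hxd : x = d := by
      rw [Option.mem_def, hHl'] at hx
      exact (Option.some.inj hx).symm
    rw [hxd]
    exact hjun d (by rw [Option.mem_def]; exact hd) y hy
  · rw [map_append, hHm', hGm]
  · rw [head?_append_of_ne_nil _ hHne, hHh, hTh]
    conv_rhs => rw [← take_append_drop (P ++ Q).length U]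
    rw [head?_append_of_ne_nil _ hFne]
  · have h1 : n < ((U.take (P ++ Q).length).take (n + 1)).length := by rw [hTlen]; omega
    have h2 : n < ((U.take (P ++ Q).length).take (n + 1) ++ V.tail).length := by
      rw [length_append, hTlen]; omega
    rw [auxGetElemAppend h2, auxGetElemAppend h1, auxGetElemTake (by omega)]
    exact haF
  · rw [getLast?_append_of_ne_nil _ hGne, auxGetLastDrop (by omega)]

lemma expand {P Q R : List AY} {n : ℕ} (hn : n + 1 ≤ P.length) (hR : R ≠ [])
    (hrel' : ∀ a b, PRel TX πb (P.drop n) a b → PRel TX πb (P.drop n ++ Q) a b)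
    {U' : List AX} (hU : U' ∈ preim TX πb (P ++ R)) :
    ∃ U ∈ preim TX πb (P ++ Q ++ R), U.head? = U'.head? ∧ U.getLast? = U'.getLast? := by
  obtain ⟨⟨hne, hch⟩, hmap⟩ := hU
  obtain ⟨hFm, hGm, hFc, hGc, hjun, hFlen⟩ := split_app (A := P) (B := R) hch hmap
  have hlenU : U'.length = P.length + R.length := by
    have h1 := congrArg List.length hmap
    simp only [length_map, length_append] at h1
    omega
  have hRpos : 0 < R.length := length_pos_iff.mpr hR
  have hnP : n < P.length := by omega
  obtain ⟨c, hcF⟩ : ∃ c, (U'.take P.length)[n]? = some c := by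
    have hlt : n < (U'.take P.length).length := by rw [hFlen]; omega
    exact ⟨_, getElem?_eq_getElem hlt⟩
  have hFne : U'.take P.length ≠ [] := by
    intro h0
    have := congrArg List.length h0
    rw [hFlen] at this
    simp only [length_nil] at this
    omega
  obtain ⟨d, hd⟩ := auxExistsLast hFne
  have hseg : PRel TX πb (P.drop n) c d := seg_drop hFc hFm hcF hd
  obtain ⟨V, hVc, hVm, hVh, hVl⟩ := hrel' c d hseg
  obtain ⟨hTc, hTm, hTh, hTl, hTlen⟩ := seg_take hFc hFm hcF
  obtain ⟨hHc, hHh, hHl, hHm⟩ := glue (πb := πb) hTc hVc hTl hVh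
  have hdropne : P.drop n ≠ [] := by
    intro h0
    have := congrArg List.length h0
    rw [length_drop] at this
    simp only [length_nil] at this
    omega
  have hHm' : (((U'.take P.length).take (n + 1) ++ V.tail)).map πb = P ++ Q := by
    rw [hHm, hTm, hVm, auxTailAppend hdropne, tail_drop, ← append_assoc, take_append_drop]
  have hHl' : ((U'.take P.length).take (n + 1) ++ V.tail).getLast? = some d :=
    hHl.trans hVl
  have hGne : U'.drop P.length ≠ [] := by
    intro h0
    have := congrArg List.length h0
    rw [length_drop] at this
    simp only [length_nil] at this
    omega
  have hHne : (U'.take P.length).take (n + 1) ++ V.tail ≠ [] := by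
    intro h0; have := congrArg List.length h0
    rw [length_append, hTlen] at this
    simp only [length_nil] at this
    omega
  refine ⟨((U'.take P.length).take (n + 1) ++ V.tail) ++ U'.drop P.length,
    ⟨⟨?_, ?_⟩, ?_⟩, ?_, ?_⟩
  · intro h0
    have := congrArg List.length h0
    rw [length_append, length_append, hTlen] at this
    simp only [length_nil] at this
    omega
  · refine isChain_append.mpr ?_
    refine ⟨hHc, hGc, ?_⟩
    intro x hx y hy
    have hxd : x = d := by
      rw [Option.mem_def, hHl'] at hx
      exact (Option.some.inj hx).symm
    rw [hxd]
    exact hjun d (by rw [Option.mem_def]; exact hd) y hy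
  · rw [map_append, hHm', hGm, append_assoc]
  · rw [head?_append_of_ne_nil _ hHne, hHh, hTh]
    conv_rhs => rw [← take_append_drop P.length U']
    rw [head?_append_of_ne_nil _ hFne]
  · rw [getLast?_append_of_ne_nil _ hGne, auxGetLastDrop (by omega)]

lemma exists_getElem?_of_lt {α : Type*} {l : List α} {k : ℕ} (h : k < l.length) :
    ∃ x, l[k]? = some x := ⟨l[k], getElem?_eq_getElem h⟩

lemma cut_right {P Q R : List AY} {n : ℕ} {M : Finset AX}
    (h : IsTransBlock TX πb (P ++ Q ++ R) n M) (hn : n + 1 ≤ P.length) (hR : R ≠ [])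
    (hrel : ∀ a b, PRel TX πb (P.drop n) a b ↔ PRel TX πb (P.drop n ++ Q) a b) :
    IsTransBlock TX πb (P ++ R) n M := by
  obtain ⟨hY, hn0, hnlt, hM, hroute⟩ := h
  have hrel1 : ∀ a b, PRel TX πb (P.drop n ++ Q) a b → PRel TX πb (P.drop n) a b :=
    fun a b => (hrel a b).mpr
  have hrel2 : ∀ a b, PRel TX πb (P.drop n) a b → PRel TX πb (P.drop n ++ Q) a b :=
    fun a b => (hrel a b).mp
  have hRpos : 0 < R.length := length_pos_iff.mpr hR
  refine ⟨?_, hn0, ?_, ?_, ?_⟩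
  · obtain ⟨U, hU⟩ := hY
    have hlen := preim_length hU
    have hnU : n < U.length := by
      rw [hlen]; simp only [length_append]; omega
    obtain ⟨a, ha⟩ := exists_getElem?_of_lt hnU
    obtain ⟨U3, hU3, -⟩ := contract hn hR hrel1 hU ha
    exact ⟨U3, hU3⟩
  · simp only [length_append]; omega
  · intro a haM
    obtain ⟨U, hU, ha⟩ := hM a haM
    obtain ⟨U3, hU3, -, ha3, -⟩ := contract hn hR hrel1 hU ha
    exact ⟨U3, hU3, ha3⟩
  · intro U' hU'
    obtain ⟨U, hU, hh, hl⟩ := expand hn hR hrel2 hU'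
    obtain ⟨a, haM, U2, hU2, h2h, h2n, h2l⟩ := hroute U hU
    obtain ⟨U3, hU3, h3h, h3n, h3l⟩ := contract hn hR hrel1 hU2 h2n
    exact ⟨a, haM, U3, hU3, by rw [h3h, h2h, hh], h3n, by rw [h3l, h2l, hl]⟩

lemma preim_reverse {W : List AY} {U : List AX} (hU : U ∈ preim TX πb W) :
    U.reverse ∈ preim (flip TX) πb W.reverse ∧ U.reverse.head? = U.getLast? ∧
      U.reverse.getLast? = U.head? ∧
      ∀ k < W.length, U.reverse[W.length - 1 - k]? = U[k]? := by
  obtain ⟨⟨hne, hch⟩, hmap⟩ := hU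
  have hlen : U.length = W.length := by
    have := congrArg List.length hmap; simpa using this
  refine ⟨⟨⟨by simpa, ?_⟩, by rw [map_reverse, hmap]⟩, head?_reverse, getLast?_reverse, ?_⟩
  · exact isChain_reverse.mpr hch
  · intro k hk
    rw [getElem?_reverse (by omega)]
    congr 1
    omega

lemma transBlock_reverse {W : List AY} {n : ℕ} {M : Finset AX}
    (h : IsTransBlock TX πb W n M) :
    IsTransBlock (flip TX) πb W.reverse (W.length - 1 - n) M := by
  obtain ⟨hY, hn0, hnlt, hM, hroute⟩ := h
  have hW3 : n + 2 ≤ W.length := by omega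
  have hkey : ∀ U', U' ∈ preim (flip TX) πb W.reverse → U'.reverse ∈ preim TX πb W := by
    intro U' h'
    have h2 := (preim_reverse (TX := flip TX) h').1
    rw [reverse_reverse] at h2
    exact h2
  refine ⟨?_, by omega, by rw [length_reverse]; omega, ?_, ?_⟩
  · obtain ⟨U, hU⟩ := hY
    exact ⟨U.reverse, (preim_reverse hU).1⟩
  · intro a ha
    obtain ⟨U, hU, hk⟩ := hM a ha
    obtain ⟨hUr, -, -, hidx⟩ := preim_reverse hU
    exact ⟨U.reverse, hUr, by rw [hidx n (by omega)]; exact hk⟩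
  · intro U' hU'
    have hU'' := hkey U' hU'
    obtain ⟨a, haM, U2, hU2, h2h, h2n, h2l⟩ := hroute U'.reverse hU''
    obtain ⟨hUr, hrh, hrl, hidx⟩ := preim_reverse hU2
    refine ⟨a, haM, U2.reverse, hUr, ?_, ?_, ?_⟩
    · rw [hrh, h2l, getLast?_reverse]
    · rw [hidx n (by omega)]; exact h2n
    · rw [hrl, h2h, head?_reverse]

end Core


section Pigeon
variable {AX AY : Type*} [Fintype AX] [Fintype AY] [DecidableEq AX] [DecidableEq AY]
  [Nonempty AX] {TX : AX → AX → Prop} {πb : AX → AY}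

lemma fiber_card_le (w : AY) : (fiber πb w).card ≤ fMax πb := by
  exact Finset.le_sup (f := fun b : AY => (fiber πb b).card) (Finset.mem_univ w)

lemma step_right {W : List AY} {n : ℕ} {M : Finset AX}
    (h : IsTransBlock TX πb W n M)
    (hlong : Fintype.card AY * 2 ^ ((fMax πb) ^ 2) < W.length - 1 - n) :
    ∃ W', IsTransBlock TX πb W' n M ∧ W'.length < W.length := by
  classical
  have hn0 : 0 < n := h.2.1
  have hnlt : n < W.length - 1 := h.2.2.1
  have hWn : n < W.length := by omega
  set d : AY := πb (Classical.arbitrary AX) with hd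
  set F : Finset AX := fiber πb (W.getD n d) with hF
  set T : Finset (AY × Finset (AX × AX)) :=
    Finset.univ.biUnion (fun w : AY => ({w} : Finset AY) ×ˢ (F ×ˢ fiber πb w).powerset)
    with hT
  have hTcard : T.card ≤ Fintype.card AY * 2 ^ ((fMax πb) ^ 2) := by
    calc T.card ≤ ∑ w : AY, (({w} : Finset AY) ×ˢ (F ×ˢ fiber πb w).powerset).card :=
          Finset.card_biUnion_le
    _ = ∑ w : AY, 2 ^ (F.card * (fiber πb w).card) := by
        refine Finset.sum_congr rfl fun w _ => ?_
        rw [Finset.card_product, Finset.card_singleton, one_mul, Finset.card_powerset,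
          Finset.card_product]
    _ ≤ ∑ _w : AY, 2 ^ ((fMax πb) ^ 2) := by
        refine Finset.sum_le_sum fun w _ => ?_
        refine Nat.pow_le_pow_right (by norm_num) ?_
        rw [sq]
        exact Nat.mul_le_mul (by rw [hF]; exact fiber_card_le _) (fiber_card_le _)
    _ = Fintype.card AY * 2 ^ ((fMax πb) ^ 2) := by
        rw [Finset.sum_const, Finset.card_univ, smul_eq_mul]
  have hmaps : ∀ k ∈ Finset.Ico n (W.length - 1),
      (fun k => ((W.getD k d, (F ×ˢ fiber πb (W.getD k d)).filter
        (fun q => PRel TX πb ((W.take (k + 1)).drop n) q.1 q.2)) :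
          AY × Finset (AX × AX))) k ∈ T := by
    intro k _
    rw [hT, Finset.mem_biUnion]
    exact ⟨W.getD k d, Finset.mem_univ _, Finset.mem_product.mpr
      ⟨Finset.mem_singleton_self _, Finset.mem_powerset.mpr (Finset.filter_subset _ _)⟩⟩
  have hcard : T.card < (Finset.Ico n (W.length - 1)).card := by
    rw [Nat.card_Ico]; omega
  obtain ⟨i0, hi0, j0, hj0, hij, hsig0⟩ :=
    Finset.exists_ne_map_eq_of_card_lt_of_maps_to hcard hmaps
  obtain ⟨i, j, hi, hj, hlt, hsig⟩ : ∃ i j, i ∈ Finset.Ico n (W.length - 1) ∧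
      j ∈ Finset.Ico n (W.length - 1) ∧ i < j ∧
      ((W.getD i d, (F ×ˢ fiber πb (W.getD i d)).filter
        (fun q => PRel TX πb ((W.take (i + 1)).drop n) q.1 q.2)) :
          AY × Finset (AX × AX)) =
      (W.getD j d, (F ×ˢ fiber πb (W.getD j d)).filter
        (fun q => PRel TX πb ((W.take (j + 1)).drop n) q.1 q.2)) := by
    rcases lt_or_gt_of_ne hij with h' | h'
    · exact ⟨i0, j0, hi0, hj0, h', hsig0⟩
    · exact ⟨j0, i0, hj0, hi0, h', hsig0.symm⟩
  rw [Finset.mem_Ico] at hi hj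
  have hsnd := congrArg Prod.snd hsig
  simp only at hsnd
  have hmem : ∀ k, n ≤ k → k < W.length → ∀ a b,
      PRel TX πb ((W.take (k + 1)).drop n) a b →
      (a, b) ∈ (F ×ˢ fiber πb (W.getD k d)).filter
        (fun q => PRel TX πb ((W.take (k + 1)).drop n) q.1 q.2) := by
    intro k hk1 hk2 a b hp
    refine Finset.mem_filter.mpr ⟨Finset.mem_product.mpr ⟨?_, ?_⟩, hp⟩
    · have h1 := hp.head_eq
      rw [head?_drop, auxGetElemTake (by omega), getElem?_eq_getElem hWn] at h1
      have h2 : πb a = W[n] := (Option.some.inj h1).symm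
      rw [hF]
      simp only [fiber, Finset.mem_filter, Finset.mem_univ, true_and]
      rw [h2, List.getD_eq_getElem W d hWn]
    · have h1 := hp.last_eq
      have htk : n < (W.take (k + 1)).length := by rw [length_take]; omega
      rw [auxGetLastDrop htk, auxLastTake hk2] at h1
      have h2 : πb b = W[k] := (Option.some.inj h1).symm
      simp only [fiber, Finset.mem_filter, Finset.mem_univ, true_and]
      rw [h2, List.getD_eq_getElem W d hk2]
  have hkey : ∀ a b, PRel TX πb ((W.take (i + 1)).drop n) a b ↔
      PRel TX πb ((W.take (j + 1)).drop n) a b := by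
    intro a b
    constructor
    · intro hp
      have h1 := hmem i hi.1 (by omega) a b hp
      rw [hsnd] at h1
      exact (Finset.mem_filter.mp h1).2
    · intro hp
      have h1 := hmem j hj.1 (by omega) a b hp
      rw [← hsnd] at h1
      exact (Finset.mem_filter.mp h1).2
  have e1 : (i + 1) + (j - i) = j + 1 := by omega
  have h1 : W.take (j + 1) = W.take (i + 1) ++ (W.drop (i + 1)).take (j - i) := by
    rw [← e1, take_add]
  have hW : W = W.take (i + 1) ++ (W.drop (i + 1)).take (j - i) ++ W.drop (j + 1) := by
    conv_lhs => rw [← take_append_drop (j + 1) W]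
    rw [h1]
  have hseg : (W.take (j + 1)).drop n =
      (W.take (i + 1)).drop n ++ (W.drop (i + 1)).take (j - i) := by
    rw [h1, drop_append_of_le_length (by rw [length_take]; omega)]
  have h' : IsTransBlock TX πb
      (W.take (i + 1) ++ (W.drop (i + 1)).take (j - i) ++ W.drop (j + 1)) n M := by
    rw [← hW]; exact h
  have hcut := cut_right h' (by rw [length_take]; omega)
    (by
      intro h0
      have := congrArg List.length h0
      rw [length_drop] at this
      simp only [length_nil] at this
      omega)
    (by intro a b; rw [← hseg]; exact hkey a b)
  refine ⟨_, hcut, ?_⟩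
  rw [length_append, length_take, length_drop]
  have : min (i + 1) W.length = i + 1 := by omega
  omega
end Pigeon


section Assemble
variable {AX AY : Type*} [Fintype AX] [Fintype AY] [DecidableEq AX] [DecidableEq AY]
  [Nonempty AX] {TX : AX → AX → Prop} {πb : AX → AY}

lemma step_lemma {W : List AY} {n : ℕ} {M : Finset AX}
    (h : IsTransBlock TX πb W n M)
    (hlong : Fintype.card AY * 2 ^ ((fMax πb) ^ 2 + fMax πb + 1) < W.length) :
    ∃ W' n', IsTransBlock TX πb W' n' M ∧ W'.length < W.length := by
  have hAY : Nonempty AY := ⟨πb (Classical.arbitrary AX)⟩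
  have hAY1 : 1 ≤ Fintype.card AY := Fintype.card_pos
  have hf1 : 1 ≤ fMax πb := by
    have h1 : 1 ≤ (fiber πb (πb (Classical.arbitrary AX))).card :=
      Finset.card_pos.mpr ⟨Classical.arbitrary AX, by simp [fiber]⟩
    exact le_trans h1 (fiber_card_le _)
  have hn0 : 0 < n := h.2.1
  have hnlt : n < W.length - 1 := h.2.2.1
  have hNpos : 1 ≤ Fintype.card AY * 2 ^ ((fMax πb) ^ 2) :=
    Nat.one_le_iff_ne_zero.mpr (by positivity)
  have hsplit : Fintype.card AY * 2 ^ ((fMax πb) ^ 2 + fMax πb + 1) =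
      (Fintype.card AY * 2 ^ ((fMax πb) ^ 2)) * 2 ^ (fMax πb + 1) := by
    rw [show (fMax πb) ^ 2 + fMax πb + 1 = (fMax πb) ^ 2 + (fMax πb + 1) from by omega,
      pow_add, mul_assoc]
  have h4 : 4 ≤ 2 ^ (fMax πb + 1) := by
    calc (4 : ℕ) = 2 ^ 2 := by norm_num
    _ ≤ 2 ^ (fMax πb + 1) := Nat.pow_le_pow_right (by norm_num) (by omega)
  have hbig : 2 * (Fintype.card AY * 2 ^ ((fMax πb) ^ 2)) + 2 ≤
      Fintype.card AY * 2 ^ ((fMax πb) ^ 2 + fMax πb + 1) := by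
    rw [hsplit]
    calc 2 * (Fintype.card AY * 2 ^ ((fMax πb) ^ 2)) + 2
        ≤ 4 * (Fintype.card AY * 2 ^ ((fMax πb) ^ 2)) := by omega
    _ = (Fintype.card AY * 2 ^ ((fMax πb) ^ 2)) * 4 := by ring
    _ ≤ (Fintype.card AY * 2 ^ ((fMax πb) ^ 2)) * 2 ^ (fMax πb + 1) :=
        Nat.mul_le_mul_left _ h4
  have hcases : Fintype.card AY * 2 ^ ((fMax πb) ^ 2) < W.length - 1 - n ∨
      Fintype.card AY * 2 ^ ((fMax πb) ^ 2) < n := by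
    by_contra hc
    push_neg at hc
    omega
  rcases hcases with hc | hc
  · obtain ⟨W', hW', hlen⟩ := step_right h hc
    exact ⟨W', n, hW', hlen⟩
  · have hrev := transBlock_reverse h
    have hc' : Fintype.card AY * 2 ^ ((fMax πb) ^ 2) <
        W.reverse.length - 1 - (W.length - 1 - n) := by
      rw [length_reverse]; omega
    obtain ⟨V, hV, hlenV⟩ := step_right hrev hc'
    have hrev2 := transBlock_reverse hV
    have hflip : (flip (flip TX)) = TX := rfl
    rw [hflip] at hrev2
    rw [length_reverse] at hlenV
    exact ⟨V.reverse, _, hrev2, by rw [length_reverse]; omega⟩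

lemma shorten_lemma : ∀ (L : ℕ) (W : List AY) (n : ℕ) (M : Finset AX), W.length ≤ L →
    IsTransBlock TX πb W n M →
    ∃ W' n', IsTransBlock TX πb W' n' M ∧
      W'.length ≤ Fintype.card AY * 2 ^ ((fMax πb) ^ 2 + fMax πb + 1) := by
  intro L
  induction L with
  | zero =>
    intro W n M hL h
    have h1 : 0 < n := h.2.1
    have h2 : n < W.length - 1 := h.2.2.1
    omega
  | succ L ih =>
    intro W n M hL h
    by_cases hlen : W.length ≤ Fintype.card AY * 2 ^ ((fMax πb) ^ 2 + fMax πb + 1)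
    · exact ⟨W, n, h, hlen⟩
    · obtain ⟨W', n', h', hlt⟩ := step_lemma h (by omega)
      exact ih W' n' M (by omega) h'

lemma exists_transBlock (hright : ∀ a : AX, ∃ b : AX, TX a b) :
    ∃ (W : List AY) (n : ℕ) (M : Finset AX), IsTransBlock TX πb W n M := by
  classical
  have a := Classical.arbitrary AX
  obtain ⟨b, hab⟩ := hright a
  obtain ⟨c, hbc⟩ := hright b
  have hU : [a, b, c] ∈ preim TX πb [πb a, πb b, πb c] := by
    refine ⟨⟨by simp, ?_⟩, by simp⟩
    show List.Chain TX a [b, c]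
    exact List.Chain.cons hab (List.Chain.cons hbc List.Chain.nil)
  refine ⟨[πb a, πb b, πb c], 1,
    Finset.univ.filter (fun x => x ∈ preimAt TX πb [πb a, πb b, πb c] 1),
    ⟨⟨_, hU⟩, one_pos, by norm_num, ?_, ?_⟩⟩
  · intro x hx
    exact (Finset.mem_filter.mp hx).2
  · intro U hUp
    have hlen : U.length = 3 := by
      have := congrArg List.length hUp.2; simpa using this
    obtain ⟨x, hx⟩ := exists_getElem?_of_lt (l := U) (k := 1) (by omega)
    exact ⟨x, Finset.mem_filter.mpr ⟨Finset.mem_univ _, ⟨U, hUp, hx⟩⟩,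
      U, hUp, rfl, hx, rfl⟩

end Assemble

/-- There is a minimal transition block `(W, n, M)` with
`|W| ≤ |𝒜(Y)| · 2 ^ (f² + f + 1)`. -/
theorem minimal_transBlock_length_bound {AX AY : Type*}
    [Fintype AX] [Fintype AY] [DecidableEq AX] [DecidableEq AY] [Nonempty AX]
    (TX : AX → AX → Prop) (πb : AX → AY)
    (hright : ∀ a : AX, ∃ b : AX, TX a b) (hleft : ∀ a : AX, ∃ b : AX, TX b a) :
    ∃ (W : List AY) (n : ℕ) (M : Finset AX),
      IsTransBlock TX πb W n M ∧
      W.length ≤ Fintype.card AY * 2 ^ ((fMax πb) ^ 2 + fMax πb + 1) ∧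
      ∀ (W' : List AY) (n' : ℕ) (M' : Finset AX),
        IsTransBlock TX πb W' n' M' → M.card ≤ M'.card := by
  classical
  obtain ⟨W₀, n₀, M₀, h₀⟩ := exists_transBlock (πb := πb) hright
  have hS : {c : ℕ | ∃ (W : List AY) (n : ℕ) (M : Finset AX),
      IsTransBlock TX πb W n M ∧ M.card = c}.Nonempty := ⟨M₀.card, W₀, n₀, M₀, h₀, rfl⟩
  obtain ⟨W₁, n₁, M₁, h₁, hcard⟩ := Nat.sInf_mem hS
  obtain ⟨W', n', h', hlen⟩ := shorten_lemma W₁.length W₁ n₁ M₁ le_rfl h₁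
  refine ⟨W', n', M₁, h', hlen, ?_⟩
  intro W'' n'' M'' h''
  rw [hcard]
  exact Nat.sInf_le ⟨W'', n'', M'', h'', rfl⟩
end

section
/- Let π be a one-block factor code from a one-step SFT X to a sofic shift Y, and let (W, n, M) and (W', n', M) be triples such that (W, n, M) is a transition block, the blocks W_0…W_n and W'_0…W'_{n'} have the same first-position preimage set A and same position-n (resp. n') preimage set B with equal pairings, and the blocks W_n…W_t and W'_{n'}…W'_{t'} have the same endpoint preimage sets B, C with equal pairings. Then the depth of any transition block contained in W' at time n' with routing set M equals |M|; in particular, if (W, n, M) is a minimal transition block then so is (W', n', M). -/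
open List

section Helpers

variable {AX AY : Type*} {TX : AX → AX → Prop} {πb : AX → AY}

lemma preim_take' {W : List AY} {U : List AX} (h : U ∈ preim TX πb W) (k : ℕ) :
    U.take (k+1) ∈ preim TX πb (W.take (k+1)) := by
  obtain ⟨⟨hne, hch⟩, hmap⟩ := h
  refine ⟨⟨?_, hch.take _⟩, by rw [List.map_take, hmap]⟩
  cases U with
  | nil => exact absurd rfl hne
  | cons a t => simp

lemma preim_drop' {W : List AY} {U : List AX} (h : U ∈ preim TX πb W) {k : ℕ}
    (hk : k < U.length) : U.drop k ∈ preim TX πb (W.drop k) := by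
  obtain ⟨⟨hne, hch⟩, hmap⟩ := h
  refine ⟨⟨?_, hch.drop _⟩, by rw [List.map_drop, hmap]⟩
  rw [ne_eq, List.drop_eq_nil_iff]
  omega

lemma take_head?' {α : Type*} {U : List α} (k : ℕ) :
    (U.take (k+1)).head? = U.head? := by
  simp [head?_take]

lemma take_getLast?' {α : Type*} {U : List α} {k : ℕ} (hk : k < U.length) :
    (U.take (k+1)).getLast? = U[k]? := by
  rw [getLast?_eq_getElem?, length_take]
  have h : min (k+1) U.length - 1 = k := by omega
  rw [h, getElem?_take]
  simp

lemma drop_getLast?' {α : Type*} {U : List α} {k : ℕ} (hk : k < U.length) :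
    (U.drop k).getLast? = U.getLast? := by
  rw [getLast?_eq_getElem?, getLast?_eq_getElem?, length_drop, getElem?_drop]
  congr 1
  omega

lemma preim_glue' {W : List AY} {n : ℕ} {V1 V2 : List AX} {m : AX}
    (h1 : V1 ∈ preim TX πb (W.take (n+1))) (h2 : V2 ∈ preim TX πb (W.drop n))
    (hn : n + 1 ≤ W.length)
    (hl : V1.getLast? = some m) (hh : V2.head? = some m) :
    ∃ V ∈ preim TX πb W, V.head? = V1.head? ∧ V[n]? = some m ∧
      V.getLast? = V2.getLast? := by
  obtain ⟨⟨hne1, hch1⟩, hmap1⟩ := h1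
  obtain ⟨⟨hne2, hch2⟩, hmap2⟩ := h2
  have hlen1 : V1.length = n + 1 := by
    have := congrArg List.length hmap1
    rw [length_map, length_take] at this
    omega
  cases V2 with
  | nil => simp at hh
  | cons b t =>
    have hb : b = m := by simpa using hh
    subst hb
    obtain ⟨hmt, hcht⟩ := isChain_cons.mp hch2
    refine ⟨V1 ++ t, ⟨⟨?_, ?_⟩, ?_⟩, ?_, ?_, ?_⟩
    · simp [hne1]
    · refine hch1.append hcht ?_
      intro x hx y hy
      rw [hl] at hx
      simp at hx
      subst hx
      exact hmt y hy
    · rw [map_append, hmap1]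
      have : t.map πb = W.drop (n+1) := by
        have := congrArg List.tail hmap2
        simpa [tail_drop] using this
      rw [this, take_append_drop]
    · cases V1 with
      | nil => exact absurd rfl hne1
      | cons a s => simp
    · rw [getElem?_append_left (by omega), ← hl, getLast?_eq_getElem?, hlen1]; norm_num
    · rw [getLast?_append]
      cases t with
      | nil => simp [hl]
      | cons c t' =>
        rw [getLast?_eq_getLast (l := c :: t') (by simp), getLast?_cons_cons]
        simp [getLast?_eq_getLast]

end Helpers

/-- Transfer of minimality: if `(W, n, M)` is a transition block, `W'` matches
`W` in endpoint/midpoint preimage sets and half pairings, then `(W', n', M)` is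
a transition block of depth `|M|`; in particular if `(W, n, M)` is a minimal
transition block then so is `(W', n', M)`. -/
theorem minimal_transBlock_transfer {AX AY : Type*}
    (TX : AX → AX → Prop) (πb : AX → AY)
    (W W' : List AY) (n n' : ℕ) (M : Finset AX)
    (hT : IsTransBlock TX πb W n M)
    (hW' : IsYBlock TX πb W')
    (hn'0 : 0 < n') (hn't : n' < W'.length - 1)
    (h0 : preimAt TX πb W' 0 = preimAt TX πb W 0)
    (hmid : preimAt TX πb W' n' = preimAt TX πb W n)
    (hend : preimAt TX πb W' (W'.length - 1) = preimAt TX πb W (W.length - 1))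
    (hP1 : pairing TX πb (W.take (n + 1)) = pairing TX πb (W'.take (n' + 1)))
    (hP2 : pairing TX πb (W.drop n) = pairing TX πb (W'.drop n'))
    (hmin : ∀ (W'' : List AY) (n'' : ℕ) (M'' : Finset AX),
      IsTransBlock TX πb W'' n'' M'' → M.card ≤ M''.card) :
    IsTransBlock TX πb W' n' M ∧
    ∀ (W'' : List AY) (n'' : ℕ) (M'' : Finset AX),
      IsTransBlock TX πb W'' n'' M'' → M.card ≤ M''.card := by
  obtain ⟨hY, hn0, hnt, hM, hroute⟩ := hT
  refine ⟨⟨hW', hn'0, hn't, fun a ha => hmid ▸ hM a ha, ?_⟩, hmin⟩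
  intro U hU
  have hUne : U ≠ [] := hU.1.1
  have hUlen : U.length = W'.length := by
    have := congrArg List.length hU.2
    simpa using this
  have hWlen : n + 2 ≤ W.length := by omega
  have hW'len : n' + 2 ≤ W'.length := by omega
  have hn'U : n' < U.length := by omega
  -- symbols at the relevant positions of U
  set u0 := U.head hUne with hu0
  set uL := U.getLast hUne with huL
  have hU0 : U.head? = some u0 := head?_eq_head hUne
  have hUL : U.getLast? = some uL := getLast?_eq_getLast hUne
  obtain ⟨b, hb⟩ : ∃ b, U[n']? = some b := by
    rw [getElem?_eq_getElem hn'U]; exact ⟨_, rfl⟩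
  -- (u0, b) ∈ pairing of first half of W'
  have hpair1 : (u0, b) ∈ pairing TX πb (W'.take (n' + 1)) :=
    ⟨U.take (n' + 1), preim_take' hU n',
      by rw [take_head?', hU0], by rw [take_getLast?' hn'U, hb]⟩
  rw [← hP1] at hpair1
  obtain ⟨V1, hV1, hV1h, hV1l⟩ := hpair1
  -- (b, uL) ∈ pairing of second half of W'
  have hpair2 : (b, uL) ∈ pairing TX πb (W'.drop n') :=
    ⟨U.drop n', preim_drop' hU hn'U,
      by rw [head?_drop, hb], by rw [drop_getLast?' hn'U, hUL]⟩
  rw [← hP2] at hpair2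
  obtain ⟨V2, hV2, hV2h, hV2l⟩ := hpair2
  -- glue to get a preimage V of W
  obtain ⟨V, hV, hVh, hVn, hVl⟩ := preim_glue' hV1 hV2 (by omega) hV1l hV2h
  -- route V through some a ∈ M
  obtain ⟨a, haM, V', hV', hV'h, hV'n, hV'l⟩ := hroute V hV
  refine ⟨a, haM, ?_⟩
  -- now transfer back
  have hV'len : V'.length = W.length := by
    have := congrArg List.length hV'.2
    simpa using this
  have hnV' : n < V'.length := by omega
  have hV'ne : V' ≠ [] := hV'.1.1
  have hpair1' : (u0, a) ∈ pairing TX πb (W.take (n + 1)) :=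
    ⟨V'.take (n + 1), preim_take' hV' n,
      by rw [take_head?', hV'h, hVh, hV1h],
      by rw [take_getLast?' hnV', hV'n]⟩
  rw [hP1] at hpair1'
  obtain ⟨U1, hU1, hU1h, hU1l⟩ := hpair1'
  have hpair2' : (a, uL) ∈ pairing TX πb (W.drop n) :=
    ⟨V'.drop n, preim_drop' hV' hnV',
      by rw [head?_drop, hV'n],
      by rw [drop_getLast?' hnV', hV'l, hVl, hV2l]⟩
  rw [hP2] at hpair2'
  obtain ⟨U2, hU2, hU2h, hU2l⟩ := hpair2'
  obtain ⟨U'', hU'', hU''h, hU''n, hU''l⟩ := preim_glue' hU1 hU2 (by omega) hU1l hU2h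
  exact ⟨U'', hU'', by rw [hU''h, hU1h, hU0], hU''n, by rw [hU''l, hU2l, hUL]⟩
end
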